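/- Let {x_n} be a sequence in a Banach space X that is equivalent to the unit vector basis of ℓ^p (1 ≤ p < ∞), let Y be the closed linear span of {x_n}, let P : X → X be a bounded projection onto Y, and let S : X → X be a bounded operator with sup_n ‖x_n − S x_n‖ < ε where ε is small enough (depending on the equivalence constants). Then the operator P ∘ S restricted to Y, viewed via the basis equivalence as an operator on ℓ^p, is not compact. -/

import Mathlib

open Filter Topology

/-- If `(xₙ)` is equivalent to the unit vector basis of `ℓ^p`, `Y` its closed
span, `P` a bounded projection onto `Y`, and `S` satisfies `supₙ ‖xₙ − S xₙ‖ ≤ ε` with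
`ε < c/‖P‖`, then `P ∘ S` restricted to `Y` is not a compact operator. -/
theorem perturbation_not_compact
    (X : Type*) [NormedAddCommGroup X] [NormedSpace ℝ X] [CompleteSpace X]
    (p : ℝ) (hp : 1 ≤ p) (x : ℕ → X) (c C : ℝ) (hc : 0 < c) (hC : 0 < C)
    (hequiv : ∀ (s : Finset ℕ) (a : ℕ → ℝ),
      c * (∑ i ∈ s, |a i| ^ p) ^ (1 / p) ≤ ‖∑ i ∈ s, a i • x i‖ ∧
      ‖∑ i ∈ s, a i • x i‖ ≤ C * (∑ i ∈ s, |a i| ^ p) ^ (1 / p))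
    (Y : Submodule ℝ X) (hY : Y = (Submodule.span ℝ (Set.range x)).topologicalClosure)
    (P : X →L[ℝ] X) (hPY : ∀ z, P z ∈ Y) (hPid : ∀ y ∈ Y, P y = y)
    (S : X →L[ℝ] X) (ε : ℝ) (hε : ε < c / ‖P‖)
    (hS : ∀ n, ‖x n - S (x n)‖ ≤ ε) :
    ¬ IsCompactOperator ((P.comp S).comp Y.subtypeL) := by
  intro hcomp
  have hp0 : (0:ℝ) < p := lt_of_lt_of_le one_pos hp
  have hε0 : (0:ℝ) ≤ ε := le_trans (norm_nonneg _) (hS 0)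
  have hP0 : 0 < ‖P‖ := by
    rcases lt_or_eq_of_le (norm_nonneg P) with h | h
    · exact h
    · rw [← h, div_zero] at hε; linarith
  have hPε : ‖P‖ * ε < c := by
    have := (lt_div_iff₀ hP0).mp hε
    linarith
  -- norms of x n
  have hxn : ∀ n, c ≤ ‖x n‖ ∧ ‖x n‖ ≤ C := by
    intro n
    have h := hequiv {n} (fun _ => 1)
    simpa [Real.one_rpow] using h
  -- linear independence
  have hli : LinearIndependent ℝ x := by
    rw [linearIndependent_iff']
    intro s a hsum i hi
    by_contra hne
    have h := (hequiv s a).1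
    rw [hsum, norm_zero] at h
    have hpos : 0 < ∑ j ∈ s, |a j| ^ p := by
      have h1 : 0 < |a i| ^ p := Real.rpow_pos_of_pos (abs_pos.mpr hne) p
      have h2 : ∀ j ∈ s, (0:ℝ) ≤ |a j| ^ p := fun j _ => Real.rpow_nonneg (abs_nonneg _) p
      exact lt_of_lt_of_le h1 (Finset.single_le_sum h2 hi)
    have := Real.rpow_pos_of_pos hpos (1/p)
    nlinarith
  set M := Submodule.span ℝ (Set.range x) with hM
  let b : Module.Basis ℕ ℝ M := Module.Basis.span hli
  have hb : ∀ m : ℕ, (b m : X) = x m := fun m => congrArg Subtype.val (Module.Basis.span_apply hli m)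
  -- coordinate bound
  have hcoord : ∀ (n : ℕ) (y : M), |b.repr y n| ≤ (1/c) * ‖y‖ := by
    intro n y
    have hrep : (∑ i ∈ (b.repr y).support, (b.repr y) i • b i) = y := by
      conv_rhs => rw [← b.linearCombination_repr y]
      rw [Finsupp.linearCombination_apply, Finsupp.sum]
    have hrepX : (∑ i ∈ (b.repr y).support, (b.repr y) i • x i) = (y : X) := by
      have h0 := congrArg M.subtype hrep
      rw [map_sum] at h0
      simp only [map_smul, Submodule.subtype_apply] at h0
      simp only [hb] at h0
      exact h0
    have h := (hequiv (b.repr y).support (fun i => b.repr y i)).1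
    rw [hrepX] at h
    set t := (∑ i ∈ (b.repr y).support, |(b.repr y) i| ^ p) ^ (1/p) with hts
    have hSnn : (0:ℝ) ≤ ∑ i ∈ (b.repr y).support, |(b.repr y) i| ^ p :=
      Finset.sum_nonneg fun j _ => Real.rpow_nonneg (abs_nonneg _) p
    have habs : |b.repr y n| ≤ t := by
      by_cases hn : n ∈ (b.repr y).support
      · have h1 : |b.repr y n| ^ p ≤ ∑ i ∈ (b.repr y).support, |(b.repr y) i| ^ p :=
          Finset.single_le_sum (fun j _ => Real.rpow_nonneg (abs_nonneg _) p) hn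
        calc |b.repr y n| = (|b.repr y n| ^ p) ^ (1/p) := by
              rw [← Real.rpow_mul (abs_nonneg _), mul_one_div_cancel hp0.ne', Real.rpow_one]
          _ ≤ t := Real.rpow_le_rpow (Real.rpow_nonneg (abs_nonneg _) _) h1 (by positivity)
      · rw [Finsupp.notMem_support_iff.mp hn, abs_zero, hts]
        exact Real.rpow_nonneg hSnn (1/p)
    have ht : t ≤ (1/c) * ‖(y : X)‖ := by
      have h2 := mul_le_mul_of_nonneg_left h (le_of_lt (one_div_pos.mpr hc))
      calc t = (1/c) * (c * t) := by field_simp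
        _ ≤ (1/c) * ‖(y : X)‖ := h2
    have hny : ‖y‖ = ‖(y : X)‖ := rfl
    rw [hny]
    exact le_trans habs ht
  -- coordinate functionals, extended by Hahn-Banach
  have hcont : ∀ n : ℕ, ∃ g : X →L[ℝ] ℝ, (∀ y : M, g y = b.repr y n) ∧ ‖g‖ ≤ 1/c := by
    intro n
    let f : M →L[ℝ] ℝ := LinearMap.mkContinuous (b.coord n) (1/c) (fun y => by
      simpa [Module.Basis.coord_apply, Real.norm_eq_abs] using hcoord n y)
    obtain ⟨g, hg1, hg2⟩ := exists_extension_norm_eq M f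
    refine ⟨g, fun y => ?_, ?_⟩
    · rw [hg1 y]; simp [f, Module.Basis.coord_apply]
    · rw [hg2]; exact LinearMap.mkContinuous_norm_le _ (by positivity) _
  choose g hgc hgn using hcont
  have hgb : ∀ (n : ℕ) (w : X), |g n w| ≤ (1/c) * ‖w‖ := fun n w =>
    calc |g n w| = ‖g n w‖ := (Real.norm_eq_abs _).symm
      _ ≤ ‖g n‖ * ‖w‖ := (g n).le_opNorm w
      _ ≤ (1/c) * ‖w‖ := mul_le_mul_of_nonneg_right (hgn n) (norm_nonneg w)
  have hgx : ∀ n, g n (x n) = 1 := by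
    intro n
    have hmem : x n ∈ M := Submodule.subset_span ⟨n, rfl⟩
    have he : (⟨x n, hmem⟩ : M) = b n := Subtype.ext (hb n).symm
    calc g n (x n) = b.repr ⟨x n, hmem⟩ n := hgc n ⟨x n, hmem⟩
      _ = 1 := by rw [he]; simp
  -- decay on Y
  have hYclos : (Y : Set X) = closure (M : Set X) := by rw [hY]; rfl
  have hgz : ∀ z ∈ Y, Tendsto (fun n => g n z) atTop (𝓝 0) := by
    intro z hz
    rw [Metric.tendsto_atTop]
    intro η hη
    have hz' : z ∈ closure (M : Set X) := by rw [← hYclos]; exact hz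
    obtain ⟨y, hyM, hyd⟩ := Metric.mem_closure_iff.mp hz' (η * c / 2) (by positivity)
    refine ⟨((b.repr ⟨y, hyM⟩).support.sup id) + 1, fun n hn => ?_⟩
    have hns : n ∉ (b.repr ⟨y, hyM⟩).support := by
      intro hmem
      have := Finset.le_sup (f := id) hmem
      simp only [id] at this
      omega
    have h1 : g n y = 0 := by
      calc g n y = b.repr ⟨y, hyM⟩ n := hgc n ⟨y, hyM⟩
        _ = 0 := Finsupp.notMem_support_iff.mp hns
    have h2 : g n z = g n (z - y) + g n y := by rw [map_sub]; ring
    rw [dist_zero_right, Real.norm_eq_abs, h2, h1, add_zero]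
    calc |g n (z - y)| ≤ (1/c) * ‖z - y‖ := hgb n _
      _ < (1/c) * (η * c / 2) := by
          apply mul_lt_mul_of_pos_left _ (by positivity)
          rw [← dist_eq_norm]; exact hyd
      _ ≤ η / 2 := by rw [div_mul_eq_mul_div, one_mul, div_le_div_iff₀ hc (by positivity)]; ring_nf; nlinarith
      _ < η := by linarith
  -- the sequence in Y
  have hxY : ∀ n, x n ∈ Y := fun n => by
    rw [hY]; exact Submodule.le_topologicalClosure M (Submodule.subset_span ⟨n, rfl⟩)
  set T := (P.comp S).comp Y.subtypeL with hT
  let v : ℕ → Y := fun n => ⟨x n, hxY n⟩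
  have hTv : ∀ n, T (v n) = P (S (x n)) := fun n => rfl
  have hTK : IsCompact (closure (T.toLinearMap '' Metric.closedBall 0 C)) :=
    IsCompactOperator.isCompact_closure_image_closedBall (𝕜₁ := ℝ) (f := T.toLinearMap) hcomp C
  have hmemK : ∀ n, T (v n) ∈ closure (T.toLinearMap '' Metric.closedBall 0 C) := fun n =>
    subset_closure ⟨v n, by simpa [mem_closedBall_zero_iff] using (hxn n).2, rfl⟩
  obtain ⟨z, hzK, φ, hφ, hconv⟩ := hTK.tendsto_subseq (x := fun n => T (v n)) hmemK
  -- z ∈ Y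
  have hYc : IsClosed (Y : Set X) := by rw [hY]; exact Submodule.isClosed_topologicalClosure M
  have hzY : z ∈ Y := by
    have himg : (T.toLinearMap '' Metric.closedBall 0 C) ⊆ (Y : Set X) := by
      rintro _ ⟨w, _, rfl⟩; exact hPY _
    exact closure_minimal himg hYc hzK
  -- decomposition
  have hdec : ∀ n, x n = P (x n - S (x n)) + (T (v n) - z) + z := by
    intro n
    have hp' : P (x n) = x n := hPid _ (hxY n)
    rw [hTv n, map_sub, hp']
    abel
  -- key estimate
  have key : ∀ k, (1:ℝ) ≤ ‖P‖ * ε / c + (|g (φ k) (T (v (φ k)) - z)| + |g (φ k) z|) := by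
    intro k
    set n := φ k with hn
    have e1 : (1:ℝ) = g n (P (x n - S (x n))) + g n (T (v n) - z) + g n z := by
      rw [← hgx n]
      conv_lhs => rw [hdec n]
      simp [map_add]
    have e2 : |g n (P (x n - S (x n)))| ≤ ‖P‖ * ε / c := by
      have h2 : ‖P (x n - S (x n))‖ ≤ ‖P‖ * ε :=
        le_trans (P.le_opNorm _) (mul_le_mul_of_nonneg_left (hS n) (norm_nonneg P))
      calc |g n (P (x n - S (x n)))| ≤ (1/c) * ‖P (x n - S (x n))‖ := hgb n _
        _ ≤ (1/c) * (‖P‖ * ε) := by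
            apply mul_le_mul_of_nonneg_left h2 (by positivity)
        _ = ‖P‖ * ε / c := by ring
    have habs : (1:ℝ) ≤ |g n (P (x n - S (x n)))| + |g n (T (v n) - z)| + |g n z| := by
      rw [e1]
      exact le_trans (le_abs_self _)
        ((abs_add_le _ _).trans (add_le_add_left (abs_add_le _ _) _))
    linarith
  -- limits
  have l1 : Tendsto (fun k => |g (φ k) (T (v (φ k)) - z)|) atTop (𝓝 0) := by
    apply squeeze_zero (fun k => abs_nonneg _) (fun k => hgb (φ k) _)
    have hnorm : Tendsto (fun k => ‖T (v (φ k)) - z‖) atTop (𝓝 0) :=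
      tendsto_iff_norm_sub_tendsto_zero.mp hconv
    simpa using hnorm.const_mul (1/c)
  have l2 : Tendsto (fun k => |g (φ k) z|) atTop (𝓝 0) := by
    have h := (hgz z hzY).comp hφ.tendsto_atTop
    simpa using h.abs
  have hlim : Tendsto (fun k => |g (φ k) (T (v (φ k)) - z)| + |g (φ k) z|) atTop (𝓝 0) := by
    simpa using l1.add l2
  have hd : ‖P‖ * ε / c < 1 := by rw [div_lt_one hc]; exact hPε
  obtain ⟨k, hk⟩ := (hlim.eventually
    (gt_mem_nhds (show (0:ℝ) < 1 - ‖P‖ * ε / c by linarith))).exists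
  linarith [key k]
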